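/- Let 𝔽₂ be the field with two elements, let 𝒳, 𝒯 and 𝒴 be finite index sets, let L : 𝒳 × 𝒯 → 𝔽₂ and L̄ : 𝒯 × 𝒴 → 𝔽₂ be matrices, and let J = L·L̄ be their product, i.e. J(X,Y) = Σ_{ρ∈𝒯} L(X,ρ)·L̄(ρ,Y) in 𝔽₂. Let W be a linearly ordered cancellative additive commutative monoid and w : 𝒳 → W a weight function. Suppose ℬ ⊆ 𝒳 is such that the family of rows (L(B,·))_{B∈ℬ} is linearly independent over 𝔽₂ and spans the 𝔽₂-linear span of all rows of L, and such that Σ_{B∈ℬ} w(B) is minimal among all subsets of 𝒳 whose corresponding rows form a basis of the row space of L. Then for every X ∈ 𝒳 and every Y ∈ 𝒴 with J(X,Y) = 1, there exists B ∈ ℬ with J(B,Y) = 1 and w(B) ≤ w(X). -/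

import Mathlib

lemma aux_indep_iff {𝒳 𝒯 : Type*} [DecidableEq 𝒳] (L : Matrix 𝒳 𝒯 (ZMod 2)) (s : Finset 𝒳) :
    LinearIndependent (ZMod 2) (fun b : s => L (b : 𝒳)) ↔
      ∀ G : 𝒳 → ZMod 2, ∑ x ∈ s, G x • L x = 0 → ∀ x ∈ s, G x = 0 := by
  rw [Fintype.linearIndependent_iff]
  constructor
  · intro h G hG x hx
    have := h (fun b : s => G b) ?_ ⟨x, hx⟩
    · exact this
    · rw [← hG, ← Finset.sum_coe_sort s (fun x => G x • L x)]
  · intro h g hg i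
    classical
    set G : 𝒳 → ZMod 2 := fun x => if hx : x ∈ s then g ⟨x, hx⟩ else 0 with hGdef
    have h1 : ∑ x ∈ s, G x • L x = 0 := by
      rw [← Finset.sum_coe_sort s (fun x => G x • L x), ← hg]
      apply Finset.sum_congr rfl
      intro b _
      simp [hGdef, b.2]
    have := h G h1 i i.2
    simpa [hGdef, i.2] using this

lemma aux_mem_span_iff {𝒳 𝒯 : Type*} [DecidableEq 𝒳] (L : Matrix 𝒳 𝒯 (ZMod 2)) (s : Finset 𝒳)
    (v : 𝒯 → ZMod 2) :
    v ∈ Submodule.span (ZMod 2) (Set.range (fun b : s => L (b : 𝒳))) ↔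
      ∃ G : 𝒳 → ZMod 2, ∑ x ∈ s, G x • L x = v := by
  rw [Submodule.mem_span_range_iff_exists_fun]
  constructor
  · intro ⟨c, hc⟩
    classical
    refine ⟨fun x => if hx : x ∈ s then c ⟨x, hx⟩ else 0, ?_⟩
    rw [← hc, ← Finset.sum_coe_sort s]
    apply Finset.sum_congr rfl
    intro b _
    simp [b.2]
  · intro ⟨G, hG⟩
    exact ⟨fun b => G b, by rw [← hG, ← Finset.sum_coe_sort s (fun x => G x • L x)]⟩

/-- minimum-weight basis of the row space of a matrix over 𝔽₂. -/
theorem stmt_0 {𝒳 𝒯 𝒴 : Type*} [Fintype 𝒳] [Fintype 𝒯] [Fintype 𝒴] [DecidableEq 𝒳]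
    {W : Type*} [AddCommMonoid W] [LinearOrder W] [IsOrderedCancelAddMonoid W]
    (L : Matrix 𝒳 𝒯 (ZMod 2)) (Lbar : Matrix 𝒯 𝒴 (ZMod 2))
    (J : Matrix 𝒳 𝒴 (ZMod 2)) (hJ : J = L * Lbar)
    (w : 𝒳 → W) (B : Finset 𝒳)
    (hindep : LinearIndependent (ZMod 2) (fun b : B => L (b : 𝒳)))
    (hspan : Submodule.span (ZMod 2) (Set.range (fun b : B => L (b : 𝒳))) =
      Submodule.span (ZMod 2) (Set.range L))
    (hmin : ∀ B' : Finset 𝒳,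
      LinearIndependent (ZMod 2) (fun b : B' => L (b : 𝒳)) →
      Submodule.span (ZMod 2) (Set.range (fun b : B' => L (b : 𝒳))) =
        Submodule.span (ZMod 2) (Set.range L) →
      ∑ b ∈ B, w b ≤ ∑ b ∈ B', w b) :
    ∀ (X : 𝒳) (Y : 𝒴), J X Y = 1 → ∃ b ∈ B, J b Y = 1 ∧ w b ≤ w X := by
  classical
  intro X Y hXY
  have two01 : ∀ a : ZMod 2, a ≠ 0 → a = 1 := by decide
  -- write L X as a combination of rows of B
  have hXmem : L X ∈ Submodule.span (ZMod 2) (Set.range (fun b : B => L (b : 𝒳))) := by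
    rw [hspan]; exact Submodule.subset_span ⟨X, rfl⟩
  obtain ⟨G, hG⟩ := (aux_mem_span_iff L B (L X)).mp hXmem
  -- J X Y = ∑ x ∈ B, G x * J x Y
  have hJsum : J X Y = ∑ x ∈ B, G x * J x Y := by
    subst hJ
    simp only [Matrix.mul_apply]
    have hLX : ∀ ρ, L X ρ = ∑ x ∈ B, G x * L x ρ := by
      intro ρ
      rw [← hG]
      simp [Finset.sum_apply]
    calc ∑ ρ, L X ρ * Lbar ρ Y = ∑ ρ, ∑ x ∈ B, G x * L x ρ * Lbar ρ Y := by
          apply Finset.sum_congr rfl; intro ρ _; rw [hLX ρ, Finset.sum_mul]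
      _ = ∑ x ∈ B, ∑ ρ, G x * L x ρ * Lbar ρ Y := Finset.sum_comm
      _ = ∑ x ∈ B, G x * ∑ ρ, L x ρ * Lbar ρ Y := by
          apply Finset.sum_congr rfl; intro x _
          rw [Finset.mul_sum]; apply Finset.sum_congr rfl; intro ρ _; ring
  -- find b ∈ B with G b * J b Y ≠ 0
  have hex : ∃ b ∈ B, G b * J b Y ≠ 0 := by
    by_contra hc
    push_neg at hc
    rw [Finset.sum_eq_zero hc] at hJsum
    rw [hXY] at hJsum
    exact one_ne_zero hJsum
  obtain ⟨b, hbB, hb⟩ := hex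
  have hGb : G b ≠ 0 := fun h => hb (by rw [h, zero_mul])
  have hJb : J b Y = 1 := two01 _ (fun h => hb (by rw [h, mul_zero]))
  have hGb1 : G b = 1 := two01 _ hGb
  refine ⟨b, hbB, hJb, ?_⟩
  by_contra hle
  rw [not_le] at hle
  by_cases hXB : X ∈ B
  · -- X ∈ B: uniqueness of representation forces b = X
    have h0 : ∑ x ∈ B, (fun x => G x + if x = X then 1 else 0) x • L x = 0 := by
      simp only [add_smul, Finset.sum_add_distrib, hG, ite_smul, one_smul, zero_smul,
        Finset.sum_ite_eq', hXB, if_pos]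
      funext ρ
      have hs : (∑ x ∈ B, if x = X then (L x : 𝒯 → ZMod 2) else 0) = L X := by
        exact (Finset.sum_eq_single X (fun x _ hx => if_neg hx) (fun h => absurd hXB h)).trans (if_pos rfl)
      rw [hs]
      exact CharTwo.add_self_eq_zero (L X ρ)
    have hall := (aux_indep_iff L B).mp hindep _ h0 b hbB
    by_cases hbX : b = X
    · exact absurd hle (by rw [hbX]; exact lt_irrefl _)
    · simp only [hbX, if_false, add_zero] at hall
      exact hGb hall
  · -- X ∉ B: exchange b for X
    set E := B.erase b with hE
    have hXE : X ∉ E := fun h => hXB (Finset.mem_of_mem_erase h)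
    set B' : Finset 𝒳 := insert X E with hB'
    -- the split of the representation of L X
    have hsplit : L b + ∑ x ∈ E, G x • L x = L X := by
      rw [← hG, ← Finset.add_sum_erase _ _ hbB, hGb1, one_smul]
    -- linear independence of B'
    have hindep' : LinearIndependent (ZMod 2) (fun b : B' => L (b : 𝒳)) := by
      rw [aux_indep_iff]
      intro H hH
      rw [Finset.sum_insert hXE] at hH
      set K : 𝒳 → ZMod 2 := fun x => H X * G x + if x ∈ E then H x else 0 with hK
      have hKsum : ∑ x ∈ B, K x • L x = 0 := by
        simp only [hK, add_smul, Finset.sum_add_distrib, ite_smul, zero_smul]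
        rw [Finset.sum_ite_mem, Finset.inter_eq_right.mpr (Finset.erase_subset _ _)]
        have : ∑ x ∈ B, (H X * G x) • L x = H X • L X := by
          rw [← hG, Finset.smul_sum]
          apply Finset.sum_congr rfl
          intro x _
          rw [smul_smul]
        rw [this]
        exact hH
      have hKall := (aux_indep_iff L B).mp hindep K hKsum
      have hHX : H X = 0 := by
        have := hKall b hbB
        simp only [hK, Finset.notMem_erase, if_false, add_zero, hGb1, mul_one, hE] at this
        exact this
      intro x hx
      rcases Finset.mem_insert.mp hx with h | h
      · rw [h]; exact hHX
      · have := hKall x (Finset.mem_of_mem_erase h)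
        simp only [hK, h, if_pos, hHX, zero_mul, zero_add] at this
        exact this
    -- span of B'
    have hspan' : Submodule.span (ZMod 2) (Set.range (fun b : B' => L (b : 𝒳))) =
        Submodule.span (ZMod 2) (Set.range L) := by
      apply le_antisymm
      · rw [Submodule.span_le]
        rintro _ ⟨x, rfl⟩
        exact Submodule.subset_span ⟨x, rfl⟩
      · rw [← hspan, Submodule.span_le]
        rintro _ ⟨⟨x, hx⟩, rfl⟩
        by_cases hxb : x = b
        · subst hxb
          rw [SetLike.mem_coe, aux_mem_span_iff]
          refine ⟨fun y => if y = X then 1 else G y, ?_⟩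
          show ∑ y ∈ insert X E, (if y = X then (1 : ZMod 2) else G y) • L y = L x
          rw [Finset.sum_insert hXE, if_pos rfl, one_smul]
          have he : ∑ y ∈ E, (if y = X then (1 : ZMod 2) else G y) • L y
              = ∑ y ∈ E, G y • L y := by
            apply Finset.sum_congr rfl
            intro y hy
            rw [if_neg (fun h : y = X => hXE (h ▸ hy))]
          rw [he]
          have hz : ∀ v : 𝒯 → ZMod 2, v + v = 0 := fun v => funext fun ρ =>
            CharTwo.add_self_eq_zero _
          calc L X + ∑ y ∈ E, G y • L y
              = (L x + ∑ y ∈ E, G y • L y) + ∑ y ∈ E, G y • L y := by rw [hsplit]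
            _ = L x + (∑ y ∈ E, G y • L y + ∑ y ∈ E, G y • L y) := by rw [add_assoc]
            _ = L x := by rw [hz, add_zero]
        · exact Submodule.subset_span
            ⟨⟨x, Finset.mem_insert_of_mem (Finset.mem_erase.mpr ⟨hxb, hx⟩)⟩, rfl⟩
    -- weight contradiction
    have hw : ∑ x ∈ B', w x < ∑ x ∈ B, w x := by
      rw [hB', Finset.sum_insert hXE, hE, ← Finset.add_sum_erase _ _ hbB]
      exact add_lt_add_left hle _
    exact absurd (hmin B' hindep' hspan') (not_le.mpr hw)
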